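/- arXiv:0710.3245 — 2 statements merged into one kernel-verified Lean document; each statement's English description precedes it below -/
import Mathlib

section
/- For all natural numbers n ≥ 1, ∑_{i=0}^{n} ∑_{j=0}^{n} (i^2 - j^2)^2 · binomial(2n, n-i) · binomial(2n, n-j) − binomial(2n, n) · ∑_{j=0}^{n} j^4 · binomial(2n, n-j) = 2^(4n-3) · n · (2n-1). -/
open Finset

/-- cast of the standard binomial sum -/
lemma aux_M0 (m : ℕ) : ∑ k ∈ range (m + 1), (Nat.choose m k : ℤ) = 2 ^ m := by
  have := Nat.sum_range_choose m
  exact_mod_cast congrArg (Nat.cast : ℕ → ℤ) this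

/-- Pascal recursion step for weighted binomial sums. -/
lemma aux_step (m : ℕ) (f : ℕ → ℤ) :
    ∑ k ∈ range (m + 1 + 1), f k * (Nat.choose (m + 1) k : ℤ)
      = ∑ k ∈ range (m + 1), (f (k + 1) + f k) * (Nat.choose m k : ℤ) := by
  rw [Finset.sum_range_succ' (fun k => f k * (Nat.choose (m + 1) k : ℤ)) (m + 1)]
  have h1 : ∀ k ∈ range (m + 1),
      f (k + 1) * (Nat.choose (m + 1) (k + 1) : ℤ)
        = f (k + 1) * (Nat.choose m k : ℤ) + f (k + 1) * (Nat.choose m (k + 1) : ℤ) := by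
    intro k _
    rw [Nat.choose_succ_succ]
    push_cast
    ring
  rw [Finset.sum_congr rfl h1, Finset.sum_add_distrib]
  have h2 : ∑ k ∈ range (m + 1), f (k + 1) * (Nat.choose m (k + 1) : ℤ)
      = ∑ k ∈ range (m + 1), f k * (Nat.choose m k : ℤ) - f 0 := by
    have h3 := Finset.sum_range_succ' (fun k => f k * (Nat.choose m k : ℤ)) (m + 1)
    have h4 : ∑ k ∈ range (m + 1 + 1), f k * (Nat.choose m k : ℤ)
        = ∑ k ∈ range (m + 1), f k * (Nat.choose m k : ℤ) := by
      rw [Finset.sum_range_succ, Nat.choose_succ_self m]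
      simp
    rw [h4] at h3
    simp only [Nat.choose_zero_right, Nat.cast_one, mul_one] at h3 ⊢
    linarith
  have h5 : ∑ k ∈ range (m + 1), (f (k + 1) + f k) * (Nat.choose m k : ℤ)
      = ∑ k ∈ range (m + 1), f (k + 1) * (Nat.choose m k : ℤ)
        + ∑ k ∈ range (m + 1), f k * (Nat.choose m k : ℤ) := by
    rw [← Finset.sum_add_distrib]
    exact Finset.sum_congr rfl fun k _ => by ring
  rw [h2, h5]
  simp only [Nat.choose_zero_right, Nat.cast_one, mul_one]
  ring

/-- second central moment -/
lemma aux_M2 (m : ℕ) :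
    ∑ k ∈ range (m + 1), (2 * (k : ℤ) - (m : ℤ)) ^ 2 * (Nat.choose m k : ℤ)
      = (m : ℤ) * 2 ^ m := by
  induction m with
  | zero => norm_num
  | succ m ih =>
    rw [aux_step m (fun k => (2 * (k : ℤ) - ((m + 1 : ℕ) : ℤ)) ^ 2)]
    have h1 : ∀ k ∈ range (m + 1),
        ((2 * ((k + 1 : ℕ) : ℤ) - ((m + 1 : ℕ) : ℤ)) ^ 2
            + (2 * (k : ℤ) - ((m + 1 : ℕ) : ℤ)) ^ 2) * (Nat.choose m k : ℤ)
          = 2 * ((2 * (k : ℤ) - (m : ℤ)) ^ 2 * (Nat.choose m k : ℤ))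
            + 2 * (Nat.choose m k : ℤ) := by
      intro k _; push_cast; ring
    rw [Finset.sum_congr rfl h1, Finset.sum_add_distrib, ← Finset.mul_sum, ← Finset.mul_sum,
      ih, aux_M0]
    push_cast
    ring

/-- fourth central moment -/
lemma aux_M4 (m : ℕ) :
    ∑ k ∈ range (m + 1), (2 * (k : ℤ) - (m : ℤ)) ^ 4 * (Nat.choose m k : ℤ)
      = (m : ℤ) * (3 * m - 2) * 2 ^ m := by
  induction m with
  | zero => norm_num
  | succ m ih =>
    rw [aux_step m (fun k => (2 * (k : ℤ) - ((m + 1 : ℕ) : ℤ)) ^ 4)]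
    have h1 : ∀ k ∈ range (m + 1),
        ((2 * ((k + 1 : ℕ) : ℤ) - ((m + 1 : ℕ) : ℤ)) ^ 4
            + (2 * (k : ℤ) - ((m + 1 : ℕ) : ℤ)) ^ 4) * (Nat.choose m k : ℤ)
          = 2 * ((2 * (k : ℤ) - (m : ℤ)) ^ 4 * (Nat.choose m k : ℤ))
            + (12 * ((2 * (k : ℤ) - (m : ℤ)) ^ 2 * (Nat.choose m k : ℤ))
              + 2 * (Nat.choose m k : ℤ)) := by
      intro k _; push_cast; ring
    rw [Finset.sum_congr rfl h1, Finset.sum_add_distrib, Finset.sum_add_distrib,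
      ← Finset.mul_sum, ← Finset.mul_sum, ← Finset.mul_sum, ih, aux_M2, aux_M0]
    push_cast
    ring

/-- folding a symmetric sum over `range (2n+1)` onto the lower half -/
lemma aux_symm (n : ℕ) (f : ℕ → ℤ) (h : ∀ k, k ≤ n → f (2 * n - k) = f k) :
    ∑ k ∈ range (2 * n + 1), f k = 2 * ∑ k ∈ range (n + 1), f k - f n := by
  have h2n : 2 * n + 1 = n + 1 + n := by ring
  rw [h2n, Finset.sum_range_add f (n + 1) n]
  have hrefl : ∑ i ∈ range n, f (n + 1 + i) = ∑ i ∈ range n, f i := by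
    rw [← Finset.sum_range_reflect (fun i => f (n + 1 + i)) n]
    apply Finset.sum_congr rfl
    intro i hi
    rw [Finset.mem_range] at hi
    have e : n + 1 + (n - 1 - i) = 2 * n - i := by omega
    rw [e, h i (by omega)]
  rw [hrefl]
  have := Finset.sum_range_succ f n
  omega

theorem lemma4_spinor_identity (n : ℕ) (hn : 1 ≤ n) :
    (∑ i ∈ Finset.range (n + 1), ∑ j ∈ Finset.range (n + 1),
        ((i : ℤ) ^ 2 - (j : ℤ) ^ 2) ^ 2 * Nat.choose (2 * n) (n - i) *
          Nat.choose (2 * n) (n - j)) -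
      (Nat.choose (2 * n) n : ℤ) *
        ∑ j ∈ Finset.range (n + 1), (j : ℤ) ^ 4 * Nat.choose (2 * n) (n - j) =
      2 ^ (4 * n - 3) * n * (2 * n - 1) := by
  set T : ℤ := 2 ^ (2 * n) with hT
  set C : ℤ := (Nat.choose (2 * n) n : ℤ) with hC
  set A0 : ℤ := ∑ j ∈ range (n + 1), (Nat.choose (2 * n) (n - j) : ℤ) with hA0
  set A2 : ℤ := ∑ j ∈ range (n + 1), (j : ℤ) ^ 2 * (Nat.choose (2 * n) (n - j) : ℤ) with hA2
  set A4 : ℤ := ∑ j ∈ range (n + 1), (j : ℤ) ^ 4 * (Nat.choose (2 * n) (n - j) : ℤ) with hA4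
  -- symmetry of the binomial weights
  have hchoose : ∀ k, k ≤ n → Nat.choose (2 * n) (2 * n - k) = Nat.choose (2 * n) k := by
    intro k hk
    have h1 : k ≤ 2 * n := by omega
    rw [Nat.choose_symm h1]
  have hcast : ∀ k, k ≤ n → ((2 * n - k : ℕ) : ℤ) = 2 * (n : ℤ) - k := by
    intro k hk
    rw [Nat.cast_sub (by omega)]
    push_cast
    ring
  have hcast2 : ∀ j, j ≤ n → ((n - j : ℕ) : ℤ) = (n : ℤ) - j := by
    intro j hj
    rw [Nat.cast_sub hj]
  -- A0 : 2 * A0 - C = T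
  have e0 : 2 * A0 - C = T := by
    have fold := aux_symm n (fun k => (Nat.choose (2 * n) k : ℤ))
      (fun k hk => by simp only [hchoose k hk])
    have hm := aux_M0 (2 * n)
    have hlow : ∑ k ∈ range (n + 1), (Nat.choose (2 * n) k : ℤ) = A0 := by
      rw [hA0, ← Finset.sum_range_reflect (fun j => (Nat.choose (2 * n) (n - j) : ℤ)) (n + 1)]
      apply Finset.sum_congr rfl
      intro j hj
      rw [Finset.mem_range] at hj
      have e : n - (n + 1 - 1 - j) = j := by omega
      rw [e]
    rw [fold, hlow] at hm
    rw [hT, ← hm, hC]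
  -- A2 : 8 * A2 = 2 * n * T
  have e2 : 8 * A2 = 2 * (n : ℤ) * T := by
    have fold := aux_symm n
      (fun k => (2 * (k : ℤ) - ((2 * n : ℕ) : ℤ)) ^ 2 * (Nat.choose (2 * n) k : ℤ))
      (fun k hk => by
        simp only [hchoose k hk, hcast k hk]
        push_cast
        ring_nf)
    have hm := aux_M2 (2 * n)
    have hlow : ∑ k ∈ range (n + 1),
        (2 * (k : ℤ) - ((2 * n : ℕ) : ℤ)) ^ 2 * (Nat.choose (2 * n) k : ℤ) = 4 * A2 := by
      rw [hA2, Finset.mul_sum,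
        ← Finset.sum_range_reflect
          (fun k => (2 * (k : ℤ) - ((2 * n : ℕ) : ℤ)) ^ 2 * (Nat.choose (2 * n) k : ℤ)) (n + 1)]
      apply Finset.sum_congr rfl
      intro j hj
      rw [Finset.mem_range] at hj
      have e : n + 1 - 1 - j = n - j := by omega
      rw [e, hcast2 j (by omega)]
      push_cast
      ring
    rw [fold, hlow] at hm
    push_cast at hm
    rw [hT]
    linear_combination hm
  -- A4 : 32 * A4 = 2 * n * (6 * n - 2) * T
  have e4 : 32 * A4 = 2 * (n : ℤ) * (6 * n - 2) * T := by
    have fold := aux_symm n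
      (fun k => (2 * (k : ℤ) - ((2 * n : ℕ) : ℤ)) ^ 4 * (Nat.choose (2 * n) k : ℤ))
      (fun k hk => by
        simp only [hchoose k hk, hcast k hk]
        push_cast
        ring_nf)
    have hm := aux_M4 (2 * n)
    have hlow : ∑ k ∈ range (n + 1),
        (2 * (k : ℤ) - ((2 * n : ℕ) : ℤ)) ^ 4 * (Nat.choose (2 * n) k : ℤ) = 16 * A4 := by
      rw [hA4, Finset.mul_sum,
        ← Finset.sum_range_reflect
          (fun k => (2 * (k : ℤ) - ((2 * n : ℕ) : ℤ)) ^ 4 * (Nat.choose (2 * n) k : ℤ)) (n + 1)]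
      apply Finset.sum_congr rfl
      intro j hj
      rw [Finset.mem_range] at hj
      have e : n + 1 - 1 - j = n - j := by omega
      rw [e, hcast2 j (by omega)]
      push_cast
      ring
    rw [fold, hlow] at hm
    push_cast at hm
    rw [hT]
    linear_combination hm
  -- expand the double sum
  have expand : (∑ i ∈ Finset.range (n + 1), ∑ j ∈ Finset.range (n + 1),
      ((i : ℤ) ^ 2 - (j : ℤ) ^ 2) ^ 2 * (Nat.choose (2 * n) (n - i) : ℤ) *
        (Nat.choose (2 * n) (n - j) : ℤ)) = 2 * A0 * A4 - 2 * (A2 * A2) := by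
    have inner : ∀ i ∈ range (n + 1),
        (∑ j ∈ Finset.range (n + 1),
          ((i : ℤ) ^ 2 - (j : ℤ) ^ 2) ^ 2 * (Nat.choose (2 * n) (n - i) : ℤ) *
            (Nat.choose (2 * n) (n - j) : ℤ))
        = (i : ℤ) ^ 4 * (Nat.choose (2 * n) (n - i) : ℤ) * A0
          - 2 * ((i : ℤ) ^ 2 * (Nat.choose (2 * n) (n - i) : ℤ)) * A2
          + (Nat.choose (2 * n) (n - i) : ℤ) * A4 := by
      intro i _
      rw [hA0, hA2, hA4, Finset.mul_sum, Finset.mul_sum, Finset.mul_sum,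
        ← Finset.sum_sub_distrib, ← Finset.sum_add_distrib]
      apply Finset.sum_congr rfl
      intro j _
      ring
    rw [Finset.sum_congr rfl inner, Finset.sum_add_distrib, Finset.sum_sub_distrib,
      ← Finset.sum_mul, ← Finset.sum_mul, ← Finset.sum_mul]
    rw [hA0, hA2, hA4]
    have hmul2 : (∑ i ∈ range (n + 1), 2 * ((i : ℤ) ^ 2 * (Nat.choose (2 * n) (n - i) : ℤ)))
        = 2 * ∑ i ∈ range (n + 1), (i : ℤ) ^ 2 * (Nat.choose (2 * n) (n - i) : ℤ) := by
      rw [Finset.mul_sum]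
    rw [hmul2]
    ring
  rw [expand]
  -- power bookkeeping
  have hpow : (2 : ℤ) ^ (4 * n - 3) * 32 = 4 * T * T := by
    rw [hT, show (32 : ℤ) = 2 ^ 5 by norm_num, ← pow_add,
      show 4 * n - 3 + 5 = 2 * n + (2 * n + 2) by omega, pow_add, pow_add]
    ring
  -- final algebra
  apply mul_left_cancel₀ (a := (32 : ℤ)) (by norm_num)
  linear_combination (32 * A4) * e0 + T * e4 - ((n : ℤ) * (2 * (n : ℤ) - 1)) * hpow
    - (8 * A2 + 2 * (n : ℤ) * T) * e2
end

section
/- For all natural numbers k ≥ 2: ∑_{p=1}^{k+1} (p^4/2)·binomial(2k+2, k+1−p)·binomial(2k+2, k+1) + (1/2)·∑_{p=1}^{k+1} ∑_{q=1}^{k+1} (p−q)^2·(p+q)^2·binomial(2k+2, k+1−p)·binomial(2k+2, k+1−q) = (2k+2)(2k+1)·2^(4k−1). -/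
open Finset

private lemma ffq (r : ℕ) : ∀ n : ℕ,
    (∑ j ∈ range (n+1), (∏ i ∈ range r, ((j:ℚ) - i)) * (Nat.choose n j : ℚ)) * 2^r
      = (∏ i ∈ range r, ((n:ℚ) - i)) * 2^n := by
  induction r with
  | zero =>
      intro n
      simpa using (by exact_mod_cast congrArg (Nat.cast : ℕ → ℚ) (Nat.sum_range_choose n) :
        (∑ j ∈ range (n+1), (Nat.choose n j : ℚ)) = 2^n)
  | succ r ih =>
      intro n
      cases n with
      | zero =>
          have h0 : (∏ i ∈ range (r+1), (((0:ℕ):ℚ) - (i:ℚ))) = 0 :=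
            Finset.prod_eq_zero (Finset.mem_range.2 (Nat.succ_pos r)) (by simp)
          rw [Finset.sum_range_one, h0]
          norm_num
      | succ n =>
          rw [Finset.sum_range_succ']
          have h0 : (∏ i ∈ range (r+1), (((0:ℕ):ℚ) - i)) = 0 :=
            Finset.prod_eq_zero (Finset.mem_range.2 (Nat.succ_pos r)) (by simp)
          rw [h0]
          have hterm : ∀ i : ℕ,
              (∏ i' ∈ range (r+1), (((i+1:ℕ):ℚ) - i')) * (Nat.choose (n+1) (i+1) : ℚ)
                = ((n:ℚ)+1) * ((∏ i' ∈ range r, ((i:ℚ) - i')) * (Nat.choose n i : ℚ)) := by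
            intro i
            have hp : (∏ i' ∈ range (r+1), (((i+1:ℕ):ℚ) - i'))
                = (∏ i' ∈ range r, ((i:ℚ) - i')) * ((i:ℚ)+1) := by
              rw [Finset.prod_range_succ']
              push_cast
              congr 1
              · exact Finset.prod_congr rfl fun i' _ => by ring
              · ring
            have habs : ((i:ℚ)+1) * (Nat.choose (n+1) (i+1) : ℚ)
                = ((n:ℚ)+1) * (Nat.choose n i : ℚ) := by
              have h := congrArg (fun x : ℕ => (x:ℚ)) (Nat.add_one_mul_choose_eq n i)
              push_cast at h
              linarith [h]
            rw [hp]
            calc (∏ i' ∈ range r, ((i:ℚ) - i')) * ((i:ℚ)+1) * (Nat.choose (n+1) (i+1) : ℚ)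
                = (∏ i' ∈ range r, ((i:ℚ) - i')) * (((i:ℚ)+1) * (Nat.choose (n+1) (i+1) : ℚ)) := by ring
              _ = (∏ i' ∈ range r, ((i:ℚ) - i')) * (((n:ℚ)+1) * (Nat.choose n i : ℚ)) := by rw [habs]
              _ = ((n:ℚ)+1) * ((∏ i' ∈ range r, ((i:ℚ) - i')) * (Nat.choose n i : ℚ)) := by ring
          have hsum : (∑ i ∈ range (n+1),
              (∏ i' ∈ range (r+1), (((i+1:ℕ):ℚ) - i')) * (Nat.choose (n+1) (i+1) : ℚ))
              = ((n:ℚ)+1) * ∑ i ∈ range (n+1), (∏ i' ∈ range r, ((i:ℚ) - i')) * (Nat.choose n i : ℚ) := by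
            rw [Finset.mul_sum]
            exact Finset.sum_congr rfl fun i _ => hterm i
          rw [zero_mul, add_zero, hsum]
          have hrhs : (∏ i ∈ range (r+1), (((n+1:ℕ):ℚ) - i))
              = (∏ i' ∈ range r, ((n:ℚ) - i')) * ((n:ℚ)+1) := by
            rw [Finset.prod_range_succ']
            push_cast
            congr 1
            · exact Finset.prod_congr rfl fun i' _ => by ring
            · ring
          rw [hrhs]
          have h := ih n
          calc ((n:ℚ)+1) * (∑ i ∈ range (n+1), (∏ i' ∈ range r, ((i:ℚ) - i')) * (Nat.choose n i : ℚ)) * 2^(r+1)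
              = ((n:ℚ)+1) * 2 * ((∑ i ∈ range (n+1), (∏ i' ∈ range r, ((i:ℚ) - i')) * (Nat.choose n i : ℚ)) * 2^r) := by ring
            _ = ((n:ℚ)+1) * 2 * ((∏ i ∈ range r, ((n:ℚ) - i)) * 2^n) := by rw [h]
            _ = (∏ i' ∈ range r, ((n:ℚ) - i')) * ((n:ℚ)+1) * 2^(n+1) := by ring

private lemma moment0 (n : ℕ) : (∑ j ∈ range (n+1), (Nat.choose n j : ℚ)) = 2^n := by
  exact_mod_cast congrArg (Nat.cast : ℕ → ℚ) (Nat.sum_range_choose n)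

private lemma moment1 (n : ℕ) :
    (∑ j ∈ range (n+1), (j:ℚ) * (Nat.choose n j : ℚ)) * 2 = (n:ℚ) * 2^n := by
  have f := ffq 1 n
  have e : (∑ j ∈ range (n+1), (∏ i ∈ range 1, ((j:ℚ) - i)) * (Nat.choose n j : ℚ))
      = ∑ j ∈ range (n+1), (j:ℚ) * (Nat.choose n j : ℚ) := by
    refine Finset.sum_congr rfl fun j _ => ?_
    simp only [Finset.prod_range_succ, Finset.prod_range_zero, one_mul]
    push_cast
    ring
  have r1 : (∏ i ∈ range 1, ((n:ℚ) - i)) = (n:ℚ) := by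
    simp only [Finset.prod_range_succ, Finset.prod_range_zero, one_mul]
    push_cast; ring
  rw [e, r1] at f
  linear_combination f

private lemma moment2 (n : ℕ) :
    (∑ j ∈ range (n+1), (j:ℚ)^2 * (Nat.choose n j : ℚ)) * 4
      = ((n:ℚ)*((n:ℚ)-1) + 2*(n:ℚ)) * 2^n := by
  have f := ffq 2 n
  have e : (∑ j ∈ range (n+1), (∏ i ∈ range 2, ((j:ℚ) - i)) * (Nat.choose n j : ℚ))
      = (∑ j ∈ range (n+1), (j:ℚ)^2 * (Nat.choose n j : ℚ))
        - ∑ j ∈ range (n+1), (j:ℚ) * (Nat.choose n j : ℚ) := by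
    rw [← Finset.sum_sub_distrib]
    refine Finset.sum_congr rfl fun j _ => ?_
    simp only [Finset.prod_range_succ, Finset.prod_range_zero, one_mul]
    push_cast; ring
  have r2 : (∏ i ∈ range 2, ((n:ℚ) - i)) = (n:ℚ)*((n:ℚ)-1) := by
    simp only [Finset.prod_range_succ, Finset.prod_range_zero, one_mul]
    push_cast; ring
  rw [e, r2] at f
  linear_combination f + 2 * moment1 n

private lemma moment3 (n : ℕ) :
    (∑ j ∈ range (n+1), (j:ℚ)^3 * (Nat.choose n j : ℚ)) * 8
      = ((n:ℚ)*((n:ℚ)-1)*((n:ℚ)-2) + 6*(n:ℚ)*((n:ℚ)-1) + 4*(n:ℚ)) * 2^n := by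
  have f := ffq 3 n
  have e : (∑ j ∈ range (n+1), (∏ i ∈ range 3, ((j:ℚ) - i)) * (Nat.choose n j : ℚ))
      = (∑ j ∈ range (n+1), ((j:ℚ)^3 * (Nat.choose n j : ℚ)
          - (3*((j:ℚ)^2 * (Nat.choose n j : ℚ)) - 2*((j:ℚ) * (Nat.choose n j : ℚ))))) := by
    refine Finset.sum_congr rfl fun j _ => ?_
    simp only [Finset.prod_range_succ, Finset.prod_range_zero, one_mul]
    push_cast; ring
  rw [e, Finset.sum_sub_distrib, Finset.sum_sub_distrib, ← Finset.mul_sum, ← Finset.mul_sum] at f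
  have r3 : (∏ i ∈ range 3, ((n:ℚ) - i)) = (n:ℚ)*((n:ℚ)-1)*((n:ℚ)-2) := by
    simp only [Finset.prod_range_succ, Finset.prod_range_zero, one_mul]
    push_cast; ring
  rw [r3] at f
  linear_combination f + 6 * moment2 n - 8 * moment1 n

private lemma moment4 (n : ℕ) :
    (∑ j ∈ range (n+1), (j:ℚ)^4 * (Nat.choose n j : ℚ)) * 16
      = ((n:ℚ)*((n:ℚ)-1)*((n:ℚ)-2)*((n:ℚ)-3) + 12*(n:ℚ)*((n:ℚ)-1)*((n:ℚ)-2)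
          + 28*(n:ℚ)*((n:ℚ)-1) + 8*(n:ℚ)) * 2^n := by
  have f := ffq 4 n
  have e : (∑ j ∈ range (n+1), (∏ i ∈ range 4, ((j:ℚ) - i)) * (Nat.choose n j : ℚ))
      = (∑ j ∈ range (n+1), ((j:ℚ)^4 * (Nat.choose n j : ℚ)
          - (6*((j:ℚ)^3 * (Nat.choose n j : ℚ))
            - (11*((j:ℚ)^2 * (Nat.choose n j : ℚ)) - 6*((j:ℚ) * (Nat.choose n j : ℚ)))))) := by
    refine Finset.sum_congr rfl fun j _ => ?_
    simp only [Finset.prod_range_succ, Finset.prod_range_zero, one_mul]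
    push_cast; ring
  rw [e, Finset.sum_sub_distrib, Finset.sum_sub_distrib, Finset.sum_sub_distrib,
    ← Finset.mul_sum, ← Finset.mul_sum, ← Finset.mul_sum] at f
  have r4 : (∏ i ∈ range 4, ((n:ℚ) - i)) = (n:ℚ)*((n:ℚ)-1)*((n:ℚ)-2)*((n:ℚ)-3) := by
    simp only [Finset.prod_range_succ, Finset.prod_range_zero, one_mul]
    push_cast; ring
  rw [r4] at f
  linear_combination f + 12 * moment3 n - 44 * moment2 n + 48 * moment1 n

private lemma half_sum (m t : ℕ) :
    ∑ j ∈ range (2*m+1), ((m:ℚ) - j)^(2*t) * (Nat.choose (2*m) j : ℚ)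
    = 2 * ∑ p ∈ Icc 1 m, (p:ℚ)^(2*t) * (Nat.choose (2*m) (m - p) : ℚ)
      + (0:ℚ)^(2*t) * (Nat.choose (2*m) m : ℚ) := by
  have hsplit : ∑ j ∈ range (2*m+1), ((m:ℚ) - j)^(2*t) * (Nat.choose (2*m) j : ℚ)
      = (∑ j ∈ range (m+1), ((m:ℚ) - j)^(2*t) * (Nat.choose (2*m) j : ℚ))
        + ∑ j ∈ Ico (m+1) (2*m+1), ((m:ℚ) - j)^(2*t) * (Nat.choose (2*m) j : ℚ) := by
    rw [range_eq_Ico,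
      ← Finset.sum_Ico_consecutive (fun j => ((m:ℚ) - j)^(2*t) * (Nat.choose (2*m) j : ℚ))
        (Nat.zero_le (m+1)) (by omega : m+1 ≤ 2*m+1)]
    rw [range_eq_Ico]
  have hfirst : ∑ j ∈ range (m+1), ((m:ℚ) - j)^(2*t) * (Nat.choose (2*m) j : ℚ)
      = (∑ i ∈ range m, ((i:ℚ)+1)^(2*t) * (Nat.choose (2*m) (m - (i+1)) : ℚ))
        + (0:ℚ)^(2*t) * (Nat.choose (2*m) m : ℚ) := by
    rw [← Finset.sum_range_reflect (fun j => ((m:ℚ) - j)^(2*t) * (Nat.choose (2*m) j : ℚ)) (m+1)]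
    have h1 : ∀ j ∈ range (m+1),
        (fun j => ((m:ℚ) - j)^(2*t) * (Nat.choose (2*m) j : ℚ)) (m + 1 - 1 - j)
          = (j:ℚ)^(2*t) * (Nat.choose (2*m) (m - j) : ℚ) := by
      intro j hj
      have hj' : j ≤ m := Nat.lt_succ_iff.mp (mem_range.mp hj)
      have he : (m + 1 - 1 - j) = m - j := by omega
      dsimp only
      rw [he]
      have hc : ((m - j : ℕ) : ℚ) = (m:ℚ) - j := by
        push_cast [Nat.cast_sub hj']; ring
      rw [hc]
      ring_nf
    rw [Finset.sum_congr rfl h1, Finset.sum_range_succ']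
    congr 1
    apply Finset.sum_congr rfl
    intro i _
    push_cast
    ring_nf
  have hsecond : ∑ j ∈ Ico (m+1) (2*m+1), ((m:ℚ) - j)^(2*t) * (Nat.choose (2*m) j : ℚ)
      = ∑ i ∈ range m, ((i:ℚ)+1)^(2*t) * (Nat.choose (2*m) (m - (i+1)) : ℚ) := by
    rw [Finset.sum_Ico_eq_sum_range]
    have hlen : 2*m+1 - (m+1) = m := by omega
    rw [hlen]
    apply Finset.sum_congr rfl
    intro i hi
    have hi' : i < m := mem_range.mp hi
    have hsymm : Nat.choose (2*m) (m+1+i) = Nat.choose (2*m) (m - (i+1)) := by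
      have h1 : m+1+i ≤ 2*m := by omega
      have h2 := Nat.choose_symm h1
      have h3 : 2*m - (m+1+i) = m - (i+1) := by omega
      rw [h3] at h2
      exact h2.symm
    rw [hsymm]
    have hcast : ((m:ℚ) - ((m+1+i : ℕ):ℚ)) = -(((i:ℚ))+1) := by push_cast; ring
    rw [hcast, Even.neg_pow (even_two_mul t)]
  have hIcc : ∑ p ∈ Icc 1 m, (p:ℚ)^(2*t) * (Nat.choose (2*m) (m - p) : ℚ)
      = ∑ i ∈ range m, ((i:ℚ)+1)^(2*t) * (Nat.choose (2*m) (m - (i+1)) : ℚ) := by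
    rw [← Finset.Ico_add_one_right_eq_Icc, Finset.sum_Ico_eq_sum_range]
    have he : m + 1 - 1 = m := rfl
    rw [he]
    apply Finset.sum_congr rfl
    intro i _
    have h1i : 1 + i = i + 1 := by omega
    rw [h1i]
    push_cast
    ring_nf
  rw [hsplit, hfirst, hsecond, hIcc]
  ring

private lemma final_alg (a S0 S2 S4 CM P X : ℚ) (E0 : 2*S0 + CM = P)
    (E2 : 8*S2 = (2*a+2)*P) (E4 : 32*S4 = (2*a+2)*(6*a+4)*P) (hx : P*P = 32*X) :
    S4 * (CM/2) + (1/2)*(2*(S4*S0) - 2*(S2*S2)) = (2*a+2)*(2*a+1)*X := by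
  linear_combination (S4/2)*E0 + (P/64)*E4 - ((S2 + (2*a+2)*P/8)/8)*E2
    + ((2*a+2)*(2*a+1)/32)*hx

theorem spinor_dimension_G2k_4 (k : ℕ) (hk : 2 ≤ k) :
    (∑ p ∈ Finset.Icc 1 (k + 1),
        ((p : ℚ) ^ 4 / 2) * Nat.choose (2 * k + 2) (k + 1 - p) *
          Nat.choose (2 * k + 2) (k + 1)) +
      (1 / 2 : ℚ) *
        ∑ p ∈ Finset.Icc 1 (k + 1), ∑ q ∈ Finset.Icc 1 (k + 1),
          ((p : ℚ) - q) ^ 2 * ((p : ℚ) + q) ^ 2 *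
            Nat.choose (2 * k + 2) (k + 1 - p) * Nat.choose (2 * k + 2) (k + 1 - q) =
      (2 * (k : ℚ) + 2) * (2 * (k : ℚ) + 1) * 2 ^ (4 * k - 1) := by
  have h2m : 2 * (k + 1) = 2 * k + 2 := by ring
  have H0 := half_sum (k+1) 0
  have H2 := half_sum (k+1) 1
  have H4 := half_sum (k+1) 2
  rw [h2m] at H0 H2 H4
  norm_num at H0 H2 H4
  have m0 := moment0 (2*k+2)
  have m1 := moment1 (2*k+2)
  have m2 := moment2 (2*k+2)
  have m3 := moment3 (2*k+2)
  have m4 := moment4 (2*k+2)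
  push_cast at m1 m2 m3 m4
  -- conversions of the full central-moment sums into power sums
  have e2 : ∑ j ∈ range (2*k+2+1), ((k:ℚ) + 1 - (j:ℚ))^2 * (Nat.choose (2*k+2) j : ℚ)
      = ((k:ℚ)+1)^2 * (∑ j ∈ range (2*k+2+1), (Nat.choose (2*k+2) j : ℚ))
        - 2*((k:ℚ)+1) * (∑ j ∈ range (2*k+2+1), (j:ℚ) * (Nat.choose (2*k+2) j : ℚ))
        + ∑ j ∈ range (2*k+2+1), (j:ℚ)^2 * (Nat.choose (2*k+2) j : ℚ) := by
    rw [show (∑ j ∈ range (2*k+2+1), ((k:ℚ) + 1 - (j:ℚ))^2 * (Nat.choose (2*k+2) j : ℚ))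
        = ∑ j ∈ range (2*k+2+1), ((((k:ℚ)+1)^2 * (Nat.choose (2*k+2) j : ℚ)
            - 2*((k:ℚ)+1) * ((j:ℚ) * (Nat.choose (2*k+2) j : ℚ)))
            + (j:ℚ)^2 * (Nat.choose (2*k+2) j : ℚ))
      from Finset.sum_congr rfl fun j _ => by ring]
    rw [Finset.sum_add_distrib, Finset.sum_sub_distrib,
      (Finset.mul_sum (range (2*k+2+1)) (fun j => (Nat.choose (2*k+2) j : ℚ)) (((k:ℚ)+1)^2)).symm,
      (Finset.mul_sum (range (2*k+2+1)) (fun j => (j:ℚ) * (Nat.choose (2*k+2) j : ℚ)) (2*((k:ℚ)+1))).symm]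
  have e4 : ∑ j ∈ range (2*k+2+1), ((k:ℚ) + 1 - (j:ℚ))^4 * (Nat.choose (2*k+2) j : ℚ)
      = ((k:ℚ)+1)^4 * (∑ j ∈ range (2*k+2+1), (Nat.choose (2*k+2) j : ℚ))
        - 4*((k:ℚ)+1)^3 * (∑ j ∈ range (2*k+2+1), (j:ℚ) * (Nat.choose (2*k+2) j : ℚ))
        + 6*((k:ℚ)+1)^2 * (∑ j ∈ range (2*k+2+1), (j:ℚ)^2 * (Nat.choose (2*k+2) j : ℚ))
        - 4*((k:ℚ)+1) * (∑ j ∈ range (2*k+2+1), (j:ℚ)^3 * (Nat.choose (2*k+2) j : ℚ))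
        + ∑ j ∈ range (2*k+2+1), (j:ℚ)^4 * (Nat.choose (2*k+2) j : ℚ) := by
    rw [show (∑ j ∈ range (2*k+2+1), ((k:ℚ) + 1 - (j:ℚ))^4 * (Nat.choose (2*k+2) j : ℚ))
        = ∑ j ∈ range (2*k+2+1), ((((((k:ℚ)+1)^4 * (Nat.choose (2*k+2) j : ℚ)
            - 4*((k:ℚ)+1)^3 * ((j:ℚ) * (Nat.choose (2*k+2) j : ℚ)))
            + 6*((k:ℚ)+1)^2 * ((j:ℚ)^2 * (Nat.choose (2*k+2) j : ℚ)))
            - 4*((k:ℚ)+1) * ((j:ℚ)^3 * (Nat.choose (2*k+2) j : ℚ)))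
            + (j:ℚ)^4 * (Nat.choose (2*k+2) j : ℚ))
      from Finset.sum_congr rfl fun j _ => by ring]
    rw [Finset.sum_add_distrib, Finset.sum_sub_distrib, Finset.sum_add_distrib,
      Finset.sum_sub_distrib,
      (Finset.mul_sum (range (2*k+2+1)) (fun j => (Nat.choose (2*k+2) j : ℚ)) (((k:ℚ)+1)^4)).symm,
      (Finset.mul_sum (range (2*k+2+1)) (fun j => (j:ℚ) * (Nat.choose (2*k+2) j : ℚ)) (4*((k:ℚ)+1)^3)).symm,
      (Finset.mul_sum (range (2*k+2+1)) (fun j => (j:ℚ)^2 * (Nat.choose (2*k+2) j : ℚ)) (6*((k:ℚ)+1)^2)).symm,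
      (Finset.mul_sum (range (2*k+2+1)) (fun j => (j:ℚ)^3 * (Nat.choose (2*k+2) j : ℚ)) (4*((k:ℚ)+1))).symm]
  -- the three key equations
  have E0 : 2 * (∑ p ∈ Finset.Icc 1 (k+1), (Nat.choose (2*k+2) (k+1-p) : ℚ))
      + (Nat.choose (2*k+2) (k+1) : ℚ) = 2^(2*k+2) := by
    linear_combination m0 - H0
  have E2 : 8 * (∑ p ∈ Finset.Icc 1 (k+1), (p:ℚ)^2 * (Nat.choose (2*k+2) (k+1-p) : ℚ))
      = (2*(k:ℚ)+2) * 2^(2*k+2) := by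
    linear_combination 4*e2 - 4*H2 + 4*((k:ℚ)+1)^2*m0 - 4*((k:ℚ)+1)*m1 + m2
  have E4 : 32 * (∑ p ∈ Finset.Icc 1 (k+1), (p:ℚ)^4 * (Nat.choose (2*k+2) (k+1-p) : ℚ))
      = (2*(k:ℚ)+2) * (6*(k:ℚ)+4) * 2^(2*k+2) := by
    linear_combination 16*e4 - 16*H4 + 16*((k:ℚ)+1)^4*m0 - 32*((k:ℚ)+1)^3*m1
      + 24*((k:ℚ)+1)^2*m2 - 8*((k:ℚ)+1)*m3 + m4
  have hx : (2:ℚ)^(2*k+2) * 2^(2*k+2) = 32 * 2^(4*k-1) := by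
    rw [← pow_add]
    have h : 2*k+2 + (2*k+2) = (4*k-1) + 5 := by omega
    rw [h, pow_add]
    ring
  -- rewrite the goal
  have hfs : (∑ p ∈ Finset.Icc 1 (k + 1),
        ((p : ℚ) ^ 4 / 2) * (Nat.choose (2 * k + 2) (k + 1 - p) : ℚ) *
          (Nat.choose (2 * k + 2) (k + 1) : ℚ))
      = (∑ p ∈ Finset.Icc 1 (k+1), (p:ℚ)^4 * (Nat.choose (2*k+2) (k+1-p) : ℚ))
          * ((Nat.choose (2*k+2) (k+1) : ℚ) / 2) := by
    rw [Finset.sum_mul]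
    exact Finset.sum_congr rfl fun p _ => by ring
  have hds : (∑ p ∈ Finset.Icc 1 (k + 1), ∑ q ∈ Finset.Icc 1 (k + 1),
        ((p : ℚ) - q) ^ 2 * ((p : ℚ) + q) ^ 2 *
          (Nat.choose (2 * k + 2) (k + 1 - p) : ℚ) * (Nat.choose (2 * k + 2) (k + 1 - q) : ℚ))
      = 2 * ((∑ p ∈ Finset.Icc 1 (k+1), (p:ℚ)^4 * (Nat.choose (2*k+2) (k+1-p) : ℚ))
              * (∑ p ∈ Finset.Icc 1 (k+1), (Nat.choose (2*k+2) (k+1-p) : ℚ)))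
        - 2 * ((∑ p ∈ Finset.Icc 1 (k+1), (p:ℚ)^2 * (Nat.choose (2*k+2) (k+1-p) : ℚ))
              * (∑ p ∈ Finset.Icc 1 (k+1), (p:ℚ)^2 * (Nat.choose (2*k+2) (k+1-p) : ℚ))) := by
    have hinner : ∀ p ∈ Finset.Icc 1 (k+1),
        (∑ q ∈ Finset.Icc 1 (k + 1),
          ((p : ℚ) - q) ^ 2 * ((p : ℚ) + q) ^ 2 *
            (Nat.choose (2 * k + 2) (k + 1 - p) : ℚ) * (Nat.choose (2 * k + 2) (k + 1 - q) : ℚ))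
        = ((p:ℚ)^4 * (Nat.choose (2*k+2) (k+1-p) : ℚ))
              * (∑ q ∈ Finset.Icc 1 (k+1), (Nat.choose (2*k+2) (k+1-q) : ℚ))
          - (2*((p:ℚ)^2 * (Nat.choose (2*k+2) (k+1-p) : ℚ)))
              * (∑ q ∈ Finset.Icc 1 (k+1), (q:ℚ)^2 * (Nat.choose (2*k+2) (k+1-q) : ℚ))
          + (Nat.choose (2*k+2) (k+1-p) : ℚ)
              * (∑ q ∈ Finset.Icc 1 (k+1), (q:ℚ)^4 * (Nat.choose (2*k+2) (k+1-q) : ℚ)) := by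
      intro p _
      rw [show (∑ q ∈ Finset.Icc 1 (k + 1),
            ((p : ℚ) - q) ^ 2 * ((p : ℚ) + q) ^ 2 *
              (Nat.choose (2 * k + 2) (k + 1 - p) : ℚ) * (Nat.choose (2 * k + 2) (k + 1 - q) : ℚ))
          = ∑ q ∈ Finset.Icc 1 (k+1),
              ((((p:ℚ)^4 * (Nat.choose (2*k+2) (k+1-p) : ℚ)) * (Nat.choose (2*k+2) (k+1-q) : ℚ)
                - (2*((p:ℚ)^2 * (Nat.choose (2*k+2) (k+1-p) : ℚ)))
                    * ((q:ℚ)^2 * (Nat.choose (2*k+2) (k+1-q) : ℚ)))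
                + (Nat.choose (2*k+2) (k+1-p) : ℚ)
                    * ((q:ℚ)^4 * (Nat.choose (2*k+2) (k+1-q) : ℚ)))
        from Finset.sum_congr rfl fun q _ => by ring]
      rw [Finset.sum_add_distrib, Finset.sum_sub_distrib,
        (Finset.mul_sum (Finset.Icc 1 (k+1)) (fun q => (Nat.choose (2*k+2) (k+1-q) : ℚ))
          ((p:ℚ)^4 * (Nat.choose (2*k+2) (k+1-p) : ℚ))).symm,
        (Finset.mul_sum (Finset.Icc 1 (k+1)) (fun q => (q:ℚ)^2 * (Nat.choose (2*k+2) (k+1-q) : ℚ))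
          (2*((p:ℚ)^2 * (Nat.choose (2*k+2) (k+1-p) : ℚ)))).symm,
        (Finset.mul_sum (Finset.Icc 1 (k+1)) (fun q => (q:ℚ)^4 * (Nat.choose (2*k+2) (k+1-q) : ℚ))
          ((Nat.choose (2*k+2) (k+1-p) : ℚ))).symm]
    rw [Finset.sum_congr rfl hinner, Finset.sum_add_distrib, Finset.sum_sub_distrib,
      (Finset.sum_mul (Finset.Icc 1 (k+1)) (fun p => (p:ℚ)^4 * (Nat.choose (2*k+2) (k+1-p) : ℚ))
        (∑ q ∈ Finset.Icc 1 (k+1), (Nat.choose (2*k+2) (k+1-q) : ℚ))).symm,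
      (Finset.sum_mul (Finset.Icc 1 (k+1)) (fun p => 2*((p:ℚ)^2 * (Nat.choose (2*k+2) (k+1-p) : ℚ)))
        (∑ q ∈ Finset.Icc 1 (k+1), (q:ℚ)^2 * (Nat.choose (2*k+2) (k+1-q) : ℚ))).symm,
      (Finset.sum_mul (Finset.Icc 1 (k+1)) (fun p => (Nat.choose (2*k+2) (k+1-p) : ℚ))
        (∑ q ∈ Finset.Icc 1 (k+1), (q:ℚ)^4 * (Nat.choose (2*k+2) (k+1-q) : ℚ))).symm,
      (Finset.mul_sum (Finset.Icc 1 (k+1)) (fun p => (p:ℚ)^2 * (Nat.choose (2*k+2) (k+1-p) : ℚ))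
        (2:ℚ)).symm]
    ring
  rw [hfs, hds]
  exact final_alg (k:ℚ)
    (∑ p ∈ Finset.Icc 1 (k+1), (Nat.choose (2*k+2) (k+1-p) : ℚ))
    (∑ p ∈ Finset.Icc 1 (k+1), (p:ℚ)^2 * (Nat.choose (2*k+2) (k+1-p) : ℚ))
    (∑ p ∈ Finset.Icc 1 (k+1), (p:ℚ)^4 * (Nat.choose (2*k+2) (k+1-p) : ℚ))
    (Nat.choose (2*k+2) (k+1) : ℚ) (2^(2*k+2)) (2^(4*k-1)) E0 E2 E4 hx
end
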